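/- Let V be a finite-dimensional nonzero vector space over an algebraically closed field F, let A, A* be linear endomorphisms of V with no common proper nonzero invariant subspace, and suppose there is a nondegenerate bilinear form ⟨·,·⟩ on V with ⟨Au,v⟩ = ⟨u,Av⟩ and ⟨A*u,v⟩ = ⟨u,A*v⟩ for all u,v ∈ V. Then there exists a unique antiautomorphism † of End(V) fixing both A and A*, and moreover X†† = X for all X ∈ End(V). -/

import Mathlib

open Module LinearMap

section Aux

variable {F V : Type*} [Field F] [IsAlgClosed F] [AddCommGroup V] [Module F V]
    [FiniteDimensional F V] [Nontrivial V]

/-- Burnside: the algebra generated by `A`, `Astar` is everything. -/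
theorem stmt5_adjoin_eq_top (A Astar : Module.End F V)
    (hirr : ∀ W : Submodule F V, (∀ v ∈ W, A v ∈ W) → (∀ v ∈ W, Astar v ∈ W) →
      W = ⊥ ∨ W = ⊤)
    (B : V →ₗ[F] V →ₗ[F] F)
    (hnd1 : ∀ v : V, (∀ w : V, B v w = 0) → v = 0) :
    Algebra.adjoin F {A, Astar} = ⊤ := by
  classical
  set S := Algebra.adjoin F ({A, Astar} : Set (Module.End F V)) with hSdef
  have hA : A ∈ S := Algebra.subset_adjoin (by simp)
  have hAs : Astar ∈ S := Algebra.subset_adjoin (by simp)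
  -- orbit of a nonzero vector is everything
  have reach : ∀ v : V, v ≠ 0 → ∀ u : V, ∃ X ∈ S, X v = u := by
    intro v hv u
    let ev : Module.End F V →ₗ[F] V :=
      { toFun := fun X => X v, map_add' := fun X Y => rfl, map_smul' := fun c X => rfl }
    let W : Submodule F V := Submodule.map ev (Subalgebra.toSubmodule S)
    have hWA : ∀ x ∈ W, A x ∈ W := by
      rintro x ⟨X, hX, rfl⟩
      exact ⟨A * X, S.mul_mem hA hX, rfl⟩
    have hWAs : ∀ x ∈ W, Astar x ∈ W := by
      rintro x ⟨X, hX, rfl⟩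
      exact ⟨Astar * X, S.mul_mem hAs hX, rfl⟩
    have hvW : v ∈ W := ⟨1, S.one_mem, rfl⟩
    rcases hirr W hWA hWAs with h | h
    · exact absurd (h ▸ hvW) (by simpa using hv)
    · have : u ∈ W := h ▸ Submodule.mem_top
      obtain ⟨X, hX, hXu⟩ := this
      exact ⟨X, hX, hXu⟩
  -- a minimal-rank nonzero element of S
  have hex : ∃ n : ℕ, ∃ T : Module.End F V, T ∈ S ∧ T ≠ 0 ∧
      finrank F (LinearMap.range T) = n := by
    refine ⟨_, 1, S.one_mem, ?_, rfl⟩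
    intro h
    obtain ⟨v, hv⟩ := exists_ne (0 : V)
    exact hv (by simpa using congrArg (fun X : Module.End F V => X v) h)
  obtain ⟨T, hTS, hTne, hTrk⟩ := Nat.find_spec hex
  set n₀ := Nat.find hex with hn₀
  -- T has rank one: its range is spanned by w := T u₁
  obtain ⟨u₁, hu₁⟩ : ∃ u₁, T u₁ ≠ 0 := by
    by_contra h
    push_neg at h
    exact hTne (LinearMap.ext fun v => by simpa using h v)
  set w := T u₁ with hw
  have hspan : ∀ v : V, T v ∈ Submodule.span F {w} := by
    intro u₂'
    by_contra h2
    obtain ⟨X, hXS, hXw⟩ := reach w hu₁ u₂'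
    set C := T * X with hC
    set W : Submodule F V := LinearMap.range T with hWdef
    have hCW : ∀ x ∈ W, C x ∈ W := by
      rintro x ⟨y, rfl⟩
      exact ⟨X (T y), rfl⟩
    have hWnt : Nontrivial W :=
      ⟨⟨w, ⟨u₁, rfl⟩⟩, 0, by simp [Subtype.ext_iff, hu₁]⟩
    obtain ⟨lam, hlam⟩ := Module.End.exists_eigenvalue (C.restrict hCW)
    obtain ⟨z, hz⟩ := hlam.exists_hasEigenvector
    set T' := C * T - lam • T with hT'
    have hT'S : T' ∈ S := S.sub_mem (S.mul_mem (S.mul_mem hTS hXS) hTS) (S.smul_mem hTS lam)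
    have hT'ne : T' ≠ 0 := by
      intro h0
      apply h2
      have h1 : T' u₁ = 0 := by rw [h0]; rfl
      have : T u₂' = lam • w := by
        have : C (T u₁) - lam • T u₁ = 0 := h1
        have h3 : C w = lam • w := by rwa [sub_eq_zero] at this
        calc T u₂' = T (X w) := by rw [hXw]
          _ = C w := rfl
          _ = lam • w := h3
      rw [this]
      exact Submodule.smul_mem _ _ (Submodule.mem_span_singleton_self w)
    -- T' has strictly smaller rank
    set D := C - lam • (1 : Module.End F V) with hD
    have hDW : ∀ x ∈ W, D x ∈ W := by
      intro x hx
      exact W.sub_mem (hCW x hx) (W.smul_mem _ (by simpa using hx))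
    set g' := D.restrict hDW with hg'
    have hker : Nontrivial (LinearMap.ker g') := by
      refine ⟨⟨z, ?_⟩, 0, by simp [Subtype.ext_iff, hz.2]⟩
      have : g' z = 0 := by
        apply Subtype.ext
        have hCz : C (z : V) = lam • (z : V) := by
          have := hz.apply_eq_smul
          exact congrArg Subtype.val this
        show D (z : V) = 0
        simp [hD, LinearMap.sub_apply, LinearMap.smul_apply, Module.End.one_apply, hCz]
      simpa [LinearMap.mem_ker] using this
    have hrange_le : LinearMap.range T' ≤ Submodule.map W.subtype (LinearMap.range g') := by
      rintro _ ⟨v, rfl⟩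
      refine ⟨g' ⟨T v, ⟨v, rfl⟩⟩, ⟨⟨T v, ⟨v, rfl⟩⟩, rfl⟩, ?_⟩
      show (D (T v) : V) = T' v
      simp [hD, hT', LinearMap.sub_apply, LinearMap.smul_apply, Module.End.mul_apply,
        Module.End.one_apply]
    have h1 : finrank F (Submodule.map W.subtype (LinearMap.range g')) < finrank F W := by
      rw [Submodule.finrank_map_subtype_eq]
      have := LinearMap.finrank_range_add_finrank_ker g'
      have hk : 0 < finrank F (LinearMap.ker g') := Module.finrank_pos_iff.mpr hker
      omega
    have hlt : finrank F (LinearMap.range T') < n₀ := by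
      calc finrank F (LinearMap.range T') ≤
          finrank F (Submodule.map W.subtype (LinearMap.range g')) :=
            Submodule.finrank_mono hrange_le
        _ < finrank F W := h1
        _ = n₀ := hTrk
    exact Nat.find_min hex hlt ⟨T', hT'S, hT'ne, rfl⟩
  -- extract the rank-one structure: T = f.smulRight w
  obtain ⟨u₀, hu₀⟩ : ∃ u₀, B w u₀ ≠ 0 := by
    by_contra h
    push_neg at h
    exact hu₁ (hnd1 w h)
  set h : V →ₗ[F] F := (B w u₀)⁻¹ • ((B.flip) u₀) with hh
  have hhw : h w = 1 := by
    simp [hh, LinearMap.flip_apply]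
    field_simp
  set f : V →ₗ[F] F := h ∘ₗ T with hf
  have hTv : ∀ v : V, T v = f v • w := by
    intro v
    obtain ⟨c, hc⟩ := Submodule.mem_span_singleton.mp (hspan v)
    rw [← hc]
    have : f v = c := by
      simp only [hf, LinearMap.comp_apply]
      rw [← hc, map_smul, hhw, smul_eq_mul, mul_one]
    rw [this]
  have hfu₁ : f u₁ = 1 := by
    simp only [hf, LinearMap.comp_apply, ← hw, hhw]
  -- the functionals f ∘ Y, Y ∈ S, exhaust the dual space
  set Φ : Submodule F (Module.Dual F V) :=
    Submodule.map (LinearMap.llcomp F V V F f) (Subalgebra.toSubmodule S) with hΦ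
  have hK : Φ.dualCoannihilator = ⊥ := by
    set K := Φ.dualCoannihilator with hKdef
    have hmem : ∀ x, x ∈ K ↔ ∀ Y ∈ S, f (Y x) = 0 := by
      intro x
      rw [Submodule.mem_dualCoannihilator]
      constructor
      · intro hx Y hY
        exact hx (f ∘ₗ Y) ⟨Y, hY, rfl⟩
      · rintro hx φ ⟨Y, hY, rfl⟩
        exact hx Y hY
    have hKA : ∀ x ∈ K, A x ∈ K := by
      intro x hx
      rw [hmem] at hx ⊢
      intro Y hY
      simpa [Module.End.mul_apply] using hx (Y * A) (S.mul_mem hY hA)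
    have hKAs : ∀ x ∈ K, Astar x ∈ K := by
      intro x hx
      rw [hmem] at hx ⊢
      intro Y hY
      simpa [Module.End.mul_apply] using hx (Y * Astar) (S.mul_mem hY hAs)
    rcases hirr K hKA hKAs with h | h
    · exact h
    · exfalso
      have : f u₁ = 0 := by
        have : u₁ ∈ K := h ▸ Submodule.mem_top
        simpa using (hmem u₁).mp this 1 S.one_mem
      rw [hfu₁] at this
      exact one_ne_zero this
  have hΦtop : Φ = ⊤ := by
    have := Subspace.dualCoannihilator_dualAnnihilator_eq (W := Φ)
    rw [hK, Submodule.dualAnnihilator_bot] at this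
    exact this.symm
  -- all rank-≤-1 operators are in S
  have hrank1 : ∀ (g : V →ₗ[F] F) (u : V), g.smulRight u ∈ S := by
    intro g u
    obtain ⟨X, hXS, hXw⟩ := reach w hu₁ u
    have : g ∈ Φ := hΦtop ▸ Submodule.mem_top
    obtain ⟨Y, hYS, hYg⟩ := this
    have : X * T * Y = g.smulRight u := by
      ext v
      have : f (Y v) = g v := congrArg (fun φ : Module.Dual F V => φ v) hYg
      simp [Module.End.mul_apply, hTv (Y v), this, hXw, map_smul]
    exact this ▸ S.mul_mem (S.mul_mem hXS hTS) hYS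
  -- every operator is a sum of rank-one operators
  rw [eq_top_iff]
  rintro X -
  let b := Module.finBasis F V
  have hX : X = ∑ i, (b.coord i).smulRight (X (b i)) := by
    ext v
    rw [LinearMap.sum_apply]
    simp only [LinearMap.smulRight_apply, Basis.coord_apply]
    calc X v = X (∑ i, b.repr v i • b i) := by rw [b.sum_repr v]
      _ = ∑ i, b.repr v i • X (b i) := by rw [map_sum]; simp [map_smul]
  rw [hX]
  exact sum_mem fun i _ => hrank1 _ _

end Aux

theorem stmt_5 {F V : Type*} [Field F] [IsAlgClosed F] [AddCommGroup V] [Module F V]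
    [FiniteDimensional F V] [Nontrivial V]
    (A Astar : Module.End F V)
    (hirr : ∀ W : Submodule F V, (∀ v ∈ W, A v ∈ W) → (∀ v ∈ W, Astar v ∈ W) →
      W = ⊥ ∨ W = ⊤)
    (B : V →ₗ[F] V →ₗ[F] F)
    (hnd1 : ∀ v : V, (∀ w : V, B v w = 0) → v = 0)
    (hnd2 : ∀ w : V, (∀ v : V, B v w = 0) → w = 0)
    (hBA : ∀ u v : V, B (A u) v = B u (A v))
    (hBAs : ∀ u v : V, B (Astar u) v = B u (Astar v)) :
    (∃! ρ : Module.End F V →ₗ[F] Module.End F V,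
      Function.Bijective ρ ∧
      (∀ X Y : Module.End F V, ρ (X * Y) = ρ Y * ρ X) ∧
      ρ A = A ∧ ρ Astar = Astar) ∧
    (∀ ρ : Module.End F V →ₗ[F] Module.End F V,
      Function.Bijective ρ →
      (∀ X Y : Module.End F V, ρ (X * Y) = ρ Y * ρ X) →
      ρ A = A → ρ Astar = Astar →
      ∀ X : Module.End F V, ρ (ρ X) = X) := by
  classical
  have htop := stmt5_adjoin_eq_top A Astar hirr B hnd1
  -- extensionality via the nondegenerate form
  have ext2 : ∀ Z Z' : Module.End F V, (∀ u v, B u (Z v) = B u (Z' v)) → Z = Z' := by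
    intro Z Z' h
    ext v
    have : Z v - Z' v = 0 := by
      apply hnd2
      intro u
      rw [map_sub, h u v, sub_self]
    exact sub_eq_zero.mp this
  -- construct the adjoint map
  have hβinj : Function.Injective B.flip := by
    intro x y hxy
    rw [← sub_eq_zero]
    apply hnd2
    intro v
    have : B.flip x v = B.flip y v := by rw [hxy]
    simp only [LinearMap.flip_apply] at this
    rw [map_sub, this, sub_self]
  let β : V ≃ₗ[F] Module.Dual F V :=
    LinearMap.linearEquivOfInjective B.flip hβinj (Subspace.dual_finrank_eq).symm
  have hβ : ∀ x u, β x u = B u x := fun x u => rfl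
  let ρf : Module.End F V → Module.End F V :=
    fun X => β.symm.toLinearMap ∘ₗ X.dualMap ∘ₗ β.toLinearMap
  have key : ∀ (X : Module.End F V) (u v : V), B (X u) v = B u (ρf X v) := by
    intro X u v
    have : β (ρf X v) = X.dualMap (β v) := by
      show β (β.symm (X.dualMap (β v))) = X.dualMap (β v)
      rw [LinearEquiv.apply_symm_apply]
    calc B (X u) v = β v (X u) := (hβ v (X u)).symm
      _ = X.dualMap (β v) u := rfl
      _ = β (ρf X v) u := by rw [this]
      _ = B u (ρf X v) := hβ (ρf X v) u
  have uniq : ∀ (X Z : Module.End F V), (∀ u v, B (X u) v = B u (Z v)) → Z = ρf X := by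
    intro X Z h
    apply ext2
    intro u v
    rw [← h u v, key X u v]
  let ρ : Module.End F V →ₗ[F] Module.End F V :=
    { toFun := ρf
      map_add' := by
        intro X Y
        symm
        apply uniq
        intro u v
        simp only [LinearMap.add_apply, map_add]
        rw [key, key]
      map_smul' := by
        intro c X
        symm
        apply uniq
        intro u v
        simp only [LinearMap.smul_apply, map_smul, RingHom.id_apply, smul_eq_mul]
        rw [key] }
  have hρ_apply : ∀ X, ρ X = ρf X := fun X => rfl
  have hmul : ∀ X Y : Module.End F V, ρ (X * Y) = ρ Y * ρ X := by
    intro X Y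
    refine (uniq (X * Y) (ρ Y * ρ X) ?_).symm
    intro u v
    calc B ((X * Y) u) v = B (X (Y u)) v := by rw [Module.End.mul_apply]
      _ = B (Y u) (ρf X v) := key X (Y u) v
      _ = B u (ρf Y (ρf X v)) := key Y u (ρf X v)
      _ = B u ((ρ Y * ρ X) v) := by rw [Module.End.mul_apply]; rfl
  have hρA : ρ A = A := (uniq A A hBA).symm
  have hρAs : ρ Astar = Astar := (uniq Astar Astar hBAs).symm
  have hinj : Function.Injective ρ := by
    rw [← LinearMap.ker_eq_bot]
    rw [eq_bot_iff]
    intro X hX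
    have hX0 : ρ X = 0 := hX
    have : X = 0 := by
      ext u
      apply hnd1
      intro v
      rw [key X u v, ← hρ_apply, hX0]
      simp
    simp [Submodule.mem_bot, this]
  have hbij : Function.Bijective ρ :=
    ⟨hinj, LinearMap.injective_iff_surjective.mp hinj⟩
  -- any surjective antimultiplicative map sends 1 to 1
  have hone : ∀ τ : Module.End F V →ₗ[F] Module.End F V, Function.Surjective τ →
      (∀ X Y : Module.End F V, τ (X * Y) = τ Y * τ X) → τ 1 = 1 := by
    intro τ hs hm
    have h1 : ∀ Z : Module.End F V, Z = τ 1 * Z := by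
      intro Z
      obtain ⟨X, rfl⟩ := hs Z
      calc τ X = τ (X * 1) := by rw [mul_one]
        _ = τ 1 * τ X := hm X 1
    have := h1 1
    rw [mul_one] at this
    exact this.symm
  have hρ1 : ρ 1 = 1 := hone ρ hbij.2 hmul
  -- uniqueness
  have agree : ∀ ρ' : Module.End F V →ₗ[F] Module.End F V, Function.Bijective ρ' →
      (∀ X Y : Module.End F V, ρ' (X * Y) = ρ' Y * ρ' X) →
      ρ' A = A → ρ' Astar = Astar → ρ' = ρ := by
    intro ρ' hb' hm' hA' hAs'
    have h1' : ρ' 1 = 1 := hone ρ' hb'.2 hm'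
    refine LinearMap.ext fun X => ?_
    have hXmem : X ∈ Algebra.adjoin F ({A, Astar} : Set (Module.End F V)) := by
      rw [htop]; exact Algebra.mem_top
    refine Algebra.adjoin_induction (p := fun x _ => ρ' x = ρ x) ?_ ?_ ?_ ?_ hXmem
    · rintro x hx
      rcases hx with rfl | hx
      · rw [hA', hρA]
      · rw [Set.mem_singleton_iff] at hx
        subst hx
        rw [hAs', hρAs]
    · intro r
      rw [Algebra.algebraMap_eq_smul_one, map_smul, map_smul, h1', hρ1]
    · intro x y _ _ ihx ihy
      rw [map_add, map_add, ihx, ihy]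
    · intro x y _ _ ihx ihy
      rw [hm' x y, hmul x y, ihx, ihy]
  constructor
  · exact ⟨ρ, ⟨hbij, hmul, hρA, hρAs⟩, fun ρ' ⟨hb', hm', hA', hAs'⟩ => agree ρ' hb' hm' hA' hAs'⟩
  · intro τ hb hm hA' hAs' X
    have h1 : τ 1 = 1 := hone τ hb.2 hm
    have hXmem : X ∈ Algebra.adjoin F ({A, Astar} : Set (Module.End F V)) := by
      rw [htop]; exact Algebra.mem_top
    refine Algebra.adjoin_induction (p := fun x _ => τ (τ x) = x) ?_ ?_ ?_ ?_ hXmem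
    · rintro x hx
      rcases hx with rfl | hx
      · rw [hA', hA']
      · rw [Set.mem_singleton_iff] at hx
        subst hx
        rw [hAs', hAs']
    · intro r
      rw [Algebra.algebraMap_eq_smul_one, map_smul, map_smul, h1, h1]
    · intro x y _ _ ihx ihy
      rw [map_add, map_add, ihx, ihy]
    · intro x y _ _ ihx ihy
      rw [hm x y, hm (τ y) (τ x), ihx, ihy]
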